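/- Let κ : S² × S² → ℝ be measurable with κ(Ω,Ω') = κ(Ω',Ω) for all Ω, Ω' ∈ S², κ(Ω,Ω') ≥ κ₀ for a constant κ₀ > 0, and ∫_{S²} κ(Ω,Ω') dσ(Ω') = 1 for every Ω ∈ S². Then for every bounded measurable a : S² → ℝ with ∫_{S²} a dσ = 0 one has ∫_{S²}∫_{S²} κ(Ω,Ω') a(Ω) a(Ω') dσ(Ω') dσ(Ω) ≤ (1 − 4π κ₀) ∫_{S²} a² dσ. -/

import Mathlib

open MeasureTheory Metric
open scoped RealInnerProductSpace Real Matrix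

noncomputable section

/-- Euclidean space `ℝ³`. -/
abbrev E3 : Type := EuclideanSpace ℝ (Fin 3)

/-- The unit sphere `S² ⊆ ℝ³`. -/
abbrev S2 : Type := Metric.sphere (0 : E3) 1

/-- The rotation-invariant surface measure `σ` on `S²` (total mass `4π`). -/
noncomputable def σS : Measure S2 := (volume : Measure E3).toSphere

open scoped ENNReal

lemma sigma_univ : σS Set.univ = ENNReal.ofReal (4 * π) := by
  rw [σS, Measure.toSphere_apply_univ, EuclideanSpace.volume_ball]
  have hg : Real.Gamma ((Fintype.card (Fin 3) : ℝ) / 2 + 1) = 3 / 4 * Real.sqrt π := by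
    have h12 : Real.Gamma (1/2) = Real.sqrt π := Real.Gamma_one_half_eq
    have h32 : Real.Gamma (3/2) = Real.sqrt π / 2 := by
      have : (3:ℝ)/2 = 1/2 + 1 := by norm_num
      rw [this, Real.Gamma_add_one (by norm_num), h12]; ring
    have : ((Fintype.card (Fin 3) : ℝ)) / 2 + 1 = 3/2 + 1 := by norm_num
    rw [this, Real.Gamma_add_one (by norm_num), h32]; ring
  rw [hg]
  have hπ : (0:ℝ) < Real.sqrt π := Real.sqrt_pos.2 Real.pi_pos
  have hval : Real.sqrt π ^ Fintype.card (Fin 3) / (3 / 4 * Real.sqrt π) = 4 * π / 3 := by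
    have h2 : Real.sqrt π ^ 2 = π := Real.sq_sqrt Real.pi_pos.le
    have : Real.sqrt π ^ Fintype.card (Fin 3) = π * Real.sqrt π := by
      rw [Fintype.card_fin]; nlinarith [h2]
    rw [this]; field_simp
  rw [hval]
  simp only [finrank_euclideanSpace, Fintype.card_fin, ENNReal.ofReal_one, one_pow, one_mul]
  rw [show ((3:ℕ):ℝ≥0∞) = ENNReal.ofReal 3 by simp, ← ENNReal.ofReal_mul (by norm_num)]
  ring_nf

lemma sigma_univ_toReal : (σS Set.univ).toReal = 4 * π := by
  rw [sigma_univ, ENNReal.toReal_ofReal (by positivity)]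

instance : IsFiniteMeasure σS := by
  unfold σS; infer_instance

/-- For a symmetric scattering kernel `κ ≥ κ₀ > 0` on `S²` with `∫ κ(Ω,·) dσ = 1`, and any
bounded measurable `a : S² → ℝ` with zero mean:
`∬ κ(Ω,Ω') a(Ω) a(Ω') dσ(Ω') dσ(Ω) ≤ (1 − 4π κ₀) ∫ a² dσ`. -/
theorem kernel_bilinear_bound
    (κ : S2 → S2 → ℝ) (κ₀ : ℝ) (hκmeas : Measurable (Function.uncurry κ))
    (hκsym : ∀ Ω Ω' : S2, κ Ω Ω' = κ Ω' Ω)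
    (hκ₀pos : 0 < κ₀) (hκlb : ∀ Ω Ω' : S2, κ₀ ≤ κ Ω Ω')
    (hκnorm : ∀ Ω : S2, ∫ Ω', κ Ω Ω' ∂σS = 1)
    (a : S2 → ℝ) (hameas : Measurable a) (habd : ∃ C : ℝ, ∀ x : S2, |a x| ≤ C)
    (hamean : ∫ Ω, a Ω ∂σS = 0) :
    ∫ Ω, (∫ Ω', κ Ω Ω' * a Ω * a Ω' ∂σS) ∂σS ≤ (1 - 4 * π * κ₀) * ∫ Ω, (a Ω) ^ 2 ∂σS := by
  obtain ⟨C₀, hC₀⟩ := habd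
  set C : ℝ := max C₀ 0 with hCdef
  have hC : ∀ x : S2, |a x| ≤ C := fun x => (hC₀ x).trans (le_max_left _ _)
  have hC0 : 0 ≤ C := le_max_right _ _
  have hκnn : ∀ Ω Ω' : S2, 0 ≤ κ Ω Ω' := fun Ω Ω' => hκ₀pos.le.trans (hκlb Ω Ω')
  -- sections of κ are integrable
  have hκint : ∀ Ω, Integrable (κ Ω) σS := by
    intro Ω
    by_contra h
    have := hκnorm Ω
    rw [integral_undef h] at this
    exact one_ne_zero this.symm
  -- κ is integrable on the product
  have hκprod : Integrable (Function.uncurry κ) (σS.prod σS) := by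
    rw [integrable_prod_iff hκmeas.aestronglyMeasurable]
    refine ⟨ae_of_all _ fun Ω => hκint Ω, ?_⟩
    have heq : (fun Ω => ∫ Ω', ‖Function.uncurry κ (Ω, Ω')‖ ∂σS) = fun _ => (1:ℝ) := by
      funext Ω
      have : (fun Ω' => ‖Function.uncurry κ (Ω, Ω')‖) = fun Ω' => κ Ω Ω' := by
        funext Ω'; simp [Function.uncurry, Real.norm_eq_abs, abs_of_nonneg (hκnn Ω Ω')]
      rw [this, hκnorm Ω]
    exact heq ▸ (integrable_const (1:ℝ))
  -- the integral of κ(·,Ω') - κ₀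
  have hsubint : ∀ Ω, ∫ Ω', (κ Ω Ω' - κ₀) ∂σS = 1 - 4 * π * κ₀ := by
    intro Ω
    rw [integral_sub (hκint Ω) (integrable_const κ₀), hκnorm Ω, integral_const,
      measureReal_def, sigma_univ_toReal, smul_eq_mul]
  -- the three comparison functions on the product space
  set f : S2 × S2 → ℝ := fun p => κ p.1 p.2 * a p.1 * a p.2 with hfdef
  set h : S2 × S2 → ℝ := fun p => κ₀ * a p.1 * a p.2 with hhdef
  set g₁ : S2 × S2 → ℝ := fun p => (a p.1) ^ 2 / 2 * (κ p.1 p.2 - κ₀) with hg₁def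
  set g₂ : S2 × S2 → ℝ := fun p => (a p.2) ^ 2 / 2 * (κ p.1 p.2 - κ₀) with hg₂def
  have hfmeas : Measurable f :=
    (hκmeas.mul (hameas.comp measurable_fst)).mul (hameas.comp measurable_snd)
  have hκsubprod : Integrable (fun p : S2 × S2 => κ p.1 p.2 - κ₀) (σS.prod σS) :=
    hκprod.sub (integrable_const κ₀)
  have hfint : Integrable f (σS.prod σS) := by
    refine (hκprod.const_mul (C ^ 2)).mono' hfmeas.aestronglyMeasurable (ae_of_all _ fun p => ?_)
    have h1 := hC p.1
    have h2 := hC p.2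
    have hk := hκnn p.1 p.2
    have : ‖f p‖ = κ p.1 p.2 * |a p.1| * |a p.2| := by
      simp [hfdef, Real.norm_eq_abs, abs_mul, abs_of_nonneg hk]
    rw [this]
    simp only [Function.uncurry]
    calc κ p.1 p.2 * |a p.1| * |a p.2| ≤ κ p.1 p.2 * C * C := by
          gcongr <;> first | exact hk | exact abs_nonneg _
      _ = C ^ 2 * κ p.1 p.2 := by ring
  have hhint : Integrable h (σS.prod σS) := by
    refine (integrable_const (|κ₀| * C * C)).mono'
      ((measurable_const.mul (hameas.comp measurable_fst)).mul
        (hameas.comp measurable_snd)).aestronglyMeasurable (ae_of_all _ fun p => ?_)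
    have h1 := hC p.1
    have h2 := hC p.2
    have : ‖h p‖ = |κ₀| * |a p.1| * |a p.2| := by
      simp [hhdef, Real.norm_eq_abs, abs_mul]
    rw [this]
    gcongr <;> first | exact abs_nonneg _ | skip
  have key : ∀ (g : S2 × S2 → ℝ) (b : S2 × S2 → ℝ), Measurable b → (∀ p, |b p| ≤ C ^ 2 / 2) →
      g = (fun p => b p * (κ p.1 p.2 - κ₀)) → Integrable g (σS.prod σS) := by
    intro g b hbmeas hbd hgdef
    refine (hκsubprod.const_mul (C ^ 2 / 2)).mono'
      (by rw [hgdef]; exact (hbmeas.mul (hκmeas.sub measurable_const)).aestronglyMeasurable)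
      (ae_of_all _ fun p => ?_)
    rw [hgdef]
    have hk : 0 ≤ κ p.1 p.2 - κ₀ := sub_nonneg.2 (hκlb p.1 p.2)
    have : ‖b p * (κ p.1 p.2 - κ₀)‖ = |b p| * (κ p.1 p.2 - κ₀) := by
      rw [Real.norm_eq_abs, abs_mul, abs_of_nonneg hk]
    rw [this]
    exact mul_le_mul_of_nonneg_right (hbd p) hk
  have hb1 : ∀ p : S2 × S2, |(a p.1) ^ 2 / 2| ≤ C ^ 2 / 2 := by
    intro p
    have := hC p.1
    have := abs_nonneg (a p.1)
    rw [abs_div, abs_of_nonneg (sq_nonneg (a p.1))]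
    have : (a p.1) ^ 2 ≤ C ^ 2 := by nlinarith [hC p.1, abs_nonneg (a p.1), neg_abs_le (a p.1), le_abs_self (a p.1), sq_abs (a p.1)]
    simp only [abs_two]
    linarith
  have hb2 : ∀ p : S2 × S2, |(a p.2) ^ 2 / 2| ≤ C ^ 2 / 2 := by
    intro p
    rw [abs_div, abs_of_nonneg (sq_nonneg (a p.2))]
    have : (a p.2) ^ 2 ≤ C ^ 2 := by nlinarith [hC p.2, abs_nonneg (a p.2), sq_abs (a p.2)]
    simp only [abs_two]
    linarith
  have hg₁int : Integrable g₁ (σS.prod σS) :=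
    key g₁ (fun p => (a p.1) ^ 2 / 2) (((hameas.comp measurable_fst).pow_const 2).div_const 2)
      hb1 rfl
  have hg₂int : Integrable g₂ (σS.prod σS) :=
    key g₂ (fun p => (a p.2) ^ 2 / 2) (((hameas.comp measurable_snd).pow_const 2).div_const 2)
      hb2 rfl
  -- pointwise inequality f ≤ h + g₁ + g₂
  have hpt : ∀ p : S2 × S2, f p ≤ h p + g₁ p + g₂ p := by
    intro p
    simp only [hfdef, hhdef, hg₁def, hg₂def]
    nlinarith [mul_nonneg (sub_nonneg.2 (hκlb p.1 p.2)) (sq_nonneg (a p.1 - a p.2))]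
  -- rewrite LHS as integral over product
  have hLHS : ∫ Ω, (∫ Ω', κ Ω Ω' * a Ω * a Ω' ∂σS) ∂σS = ∫ p, f p ∂(σS.prod σS) := by
    exact integral_integral hfint
  rw [hLHS]
  have step1 : ∫ p, f p ∂(σS.prod σS) ≤ ∫ p, (h p + g₁ p + g₂ p) ∂(σS.prod σS) :=
    integral_mono hfint ((hhint.add hg₁int).add hg₂int) hpt
  have hsplit : ∫ p, (h p + g₁ p + g₂ p) ∂(σS.prod σS) =
      (∫ p, h p ∂(σS.prod σS)) + (∫ p, g₁ p ∂(σS.prod σS)) + (∫ p, g₂ p ∂(σS.prod σS)) := by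
    have h1 : Integrable (fun p => h p + g₁ p) (σS.prod σS) := hhint.add hg₁int
    rw [integral_add h1 hg₂int, integral_add hhint hg₁int]
  have hH : ∫ p, h p ∂(σS.prod σS) = 0 := by
    have e : ∫ Ω, ∫ Ω', (κ₀ * a Ω * a Ω') ∂σS ∂σS = ∫ p, h p ∂(σS.prod σS) :=
      integral_integral hhint
    rw [← e]
    simp_rw [integral_const_mul, hamean, mul_zero, integral_zero]
  have hG₁ : ∫ p, g₁ p ∂(σS.prod σS) = (1 - 4 * π * κ₀) / 2 * ∫ Ω, (a Ω) ^ 2 ∂σS := by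
    have e : ∫ Ω, ∫ Ω', ((a Ω) ^ 2 / 2 * (κ Ω Ω' - κ₀)) ∂σS ∂σS = ∫ p, g₁ p ∂(σS.prod σS) :=
      integral_integral hg₁int
    rw [← e]
    simp_rw [integral_const_mul, hsubint]
    rw [show (fun Ω => (a Ω) ^ 2 / 2 * (1 - 4 * π * κ₀))
        = fun Ω => (1 - 4 * π * κ₀) / 2 * (a Ω) ^ 2 from funext fun Ω => by ring]
    rw [integral_const_mul]
  have hG₂ : ∫ p, g₂ p ∂(σS.prod σS) = (1 - 4 * π * κ₀) / 2 * ∫ Ω, (a Ω) ^ 2 ∂σS := by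
    have e : ∫ Ω, ∫ Ω', ((a Ω') ^ 2 / 2 * (κ Ω Ω' - κ₀)) ∂σS ∂σS = ∫ p, g₂ p ∂(σS.prod σS) :=
      integral_integral hg₂int
    rw [← e, integral_integral_swap hg₂int]
    have hsubint' : ∀ Ω' : S2, ∫ Ω, (κ Ω Ω' - κ₀) ∂σS = 1 - 4 * π * κ₀ := by
      intro Ω'
      have he : (fun Ω => κ Ω Ω' - κ₀) = fun Ω => κ Ω' Ω - κ₀ := by
        funext Ω; rw [hκsym Ω Ω']
      rw [he]
      exact hsubint Ω'
    simp_rw [integral_const_mul, hsubint']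
    rw [show (fun Ω' : S2 => (a Ω') ^ 2 / 2 * (1 - 4 * π * κ₀))
        = fun Ω' => (1 - 4 * π * κ₀) / 2 * (a Ω') ^ 2 from funext fun Ω' => by ring]
    rw [integral_const_mul]
  calc ∫ p, f p ∂(σS.prod σS) ≤ ∫ p, (h p + g₁ p + g₂ p) ∂(σS.prod σS) := step1
    _ = (1 - 4 * π * κ₀) * ∫ Ω, (a Ω) ^ 2 ∂σS := by rw [hsplit, hH, hG₁, hG₂]; ring
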